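/- Let R > 0 and let f : ℂ → ℂ be holomorphic on the ball B(0,R) with f(0) = 0 and λ := f'(0) ≠ 0, and assume f(z) ≠ 0 for all z ∈ B(0,R) ∖ {0}. Then, as ε → 0⁺, the circle integrals ∮_{|z|=ε} ( 2·log|f(z)|·(f'(z)/f(z)) − 2·log|z|·(1/z) ) dz converge to 2πi·log(|λ|²). Equivalently, the dynamical residue of the measure dz̄ dz/|z|² at a fixed point of multiplier λ equals log|λ|². -/

import Mathlib

open Filter Topology

/-- Averages over small circles of a function with a limit at the puncture
converge to `2π` times the limit. -/
lemma circle_avg_tendsto (Φ : ℂ → ℂ) (r : ℝ) (hr : 0 < r) (L : ℂ)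
    (hint : ∀ ε : ℝ, 0 < ε → ε < r →
      IntervalIntegrable (fun θ => Φ (circleMap 0 ε θ)) MeasureTheory.volume 0 (2 * Real.pi))
    (hL : Tendsto Φ (𝓝[≠] (0 : ℂ)) (𝓝 L)) :
    Tendsto (fun ε : ℝ => ∫ θ in (0:ℝ)..(2 * Real.pi), Φ (circleMap 0 ε θ))
      (𝓝[>] (0:ℝ)) (𝓝 ((2 * Real.pi : ℂ) * L)) := by
  have hπ : (0:ℝ) < 2 * Real.pi := by positivity
  rw [Metric.tendsto_nhdsWithin_nhds]
  intro δ hδ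
  set δ' := δ / (2 * Real.pi + 1) with hδ'def
  have hδ'pos : 0 < δ' := by positivity
  obtain ⟨ρ, hρpos, hρ⟩ := Metric.tendsto_nhdsWithin_nhds.mp hL δ' hδ'pos
  refine ⟨min ρ r, lt_min hρpos hr, ?_⟩
  intro ε hε hεd
  have hε0 : 0 < ε := hε
  have hεd' : ε < min ρ r := by
    have : dist ε 0 = ε := by rw [Real.dist_eq, sub_zero, abs_of_pos hε0]
    linarith [hεd.trans_le (le_refl _), this ▸ hεd]
  have hερ : ε < ρ := hεd'.trans_le (min_le_left _ _)
  have hεr : ε < r := hεd'.trans_le (min_le_right _ _)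
  have hbound : ∀ θ ∈ Set.uIoc (0:ℝ) (2 * Real.pi),
      ‖Φ (circleMap 0 ε θ) - L‖ ≤ δ' := by
    intro θ _
    have hz0 : circleMap 0 ε θ ≠ 0 := circleMap_ne_center hε0.ne'
    have hzd : dist (circleMap 0 ε θ) 0 < ρ := by
      rw [Complex.dist_eq, sub_zero, norm_circleMap_zero, abs_of_pos hε0]
      exact hερ
    have := hρ (show circleMap 0 ε θ ∈ {(0:ℂ)}ᶜ from hz0) hzd
    rw [dist_eq_norm] at this
    exact this.le
  have hintε := hint ε hε0 hεr
  have hconst : (∫ _ in (0:ℝ)..(2 * Real.pi), L) = (2 * Real.pi : ℂ) * L := by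
    rw [intervalIntegral.integral_const, sub_zero, Complex.real_smul]
    push_cast
    ring
  rw [dist_eq_norm, ← hconst, ← intervalIntegral.integral_sub hintε
    (intervalIntegrable_const)]
  have hle := intervalIntegral.norm_integral_le_of_norm_le_const hbound
  have : δ' * |2 * Real.pi - 0| < δ := by
    rw [sub_zero, abs_of_pos hπ, hδ'def]
    rw [div_mul_eq_mul_div, div_lt_iff₀ (by positivity)]
    nlinarith
  exact lt_of_le_of_lt hle this

/-- The Stokes computation (Res4) of Epstein's dynamical residue
`Res_f(dz̄ dz/|z|²) = log|λ|²` at a fixed point of multiplier `λ`: as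
`ε → 0⁺`, the circle integrals of
`2 log|f z| · f'(z)/f(z) − 2 log|z| · (1/z)` over `|z| = ε` converge to
`2πi · log(|λ|²)`. -/
theorem dynamical_residue_of_invariant_metric
    (R : ℝ) (hR : 0 < R) (f : ℂ → ℂ)
    (hf : DifferentiableOn ℂ f (Metric.ball (0 : ℂ) R))
    (hf0 : f 0 = 0) (lam : ℂ) (hlam : deriv f 0 = lam) (hlam0 : lam ≠ 0)
    (hnz : ∀ z ∈ Metric.ball (0 : ℂ) R, z ≠ 0 → f z ≠ 0) :
    Tendsto
      (fun ε : ℝ => ∮ z in C(0, ε),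
        ((2 * Real.log (‖f z‖) : ℂ) * (deriv f z / f z)
          - (2 * Real.log (‖z‖) : ℂ) * (1 / z)))
      (𝓝[>] (0 : ℝ))
      (𝓝 ((2 * Real.pi : ℝ) * Complex.I * (Real.log (‖lam‖ ^ 2) : ℂ))) := by
  have hball : Metric.ball (0:ℂ) R ∈ 𝓝 (0:ℂ) := Metric.ball_mem_nhds _ hR
  set g : ℂ → ℂ := dslope f 0 with hgdef
  have hg : DifferentiableOn ℂ g (Metric.ball 0 R) :=
    (Complex.differentiableOn_dslope hball).mpr hf
  have hg0 : g 0 = lam := by rw [hgdef, dslope_same, hlam]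
  have hfg : ∀ z : ℂ, f z = z * g z := by
    intro z
    rcases eq_or_ne z 0 with rfl | hz
    · simp [hf0]
    · rw [hgdef, dslope_of_ne _ hz, slope_def_field, hf0]
      field_simp
      ring
  have hgz : ∀ z ∈ Metric.ball (0:ℂ) R, g z ≠ 0 := by
    intro z hz
    rcases eq_or_ne z 0 with rfl | hz0
    · rw [hg0]; exact hlam0
    · have := hnz z hz hz0
      rw [hfg z] at this
      exact (mul_ne_zero_iff.mp this).2
  have hderiv : ∀ z ∈ Metric.ball (0:ℂ) R, deriv f z = g z + z * deriv g z := by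
    intro z hz
    have hgd : DifferentiableAt ℂ g z := hg.differentiableAt (Metric.isOpen_ball.mem_nhds hz)
    have hfeq : f = fun w => w * g w := funext hfg
    rw [hfeq, deriv_fun_mul differentiableAt_fun_id hgd, deriv_id'']
    ring
  have hganal := (hg.analyticOnNhd Metric.isOpen_ball).deriv
  -- continuity facts
  have hgc : ∀ z ∈ Metric.ball (0:ℂ) R, ContinuousAt g z := fun z hz =>
    (hg.differentiableAt (Metric.isOpen_ball.mem_nhds hz)).continuousAt
  have hfc : ∀ z ∈ Metric.ball (0:ℂ) R, ContinuousAt f z := fun z hz =>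
    (hf.differentiableAt (Metric.isOpen_ball.mem_nhds hz)).continuousAt
  have hdgc : ∀ z ∈ Metric.ball (0:ℂ) R, ContinuousAt (deriv g) z := fun z hz =>
    (hganal z hz).continuousAt
  set Φ : ℂ → ℂ := fun z =>
    2 * (Real.log (‖g z‖) : ℂ)
      + 2 * (Real.log (‖f z‖) : ℂ) * z * (deriv g z / g z) with hΦdef
  have h0mem : (0:ℂ) ∈ Metric.ball (0:ℂ) R := Metric.mem_ball_self hR
  -- continuity of Φ away from 0
  have hΦat : ∀ z ∈ Metric.ball (0:ℂ) R, z ≠ 0 → ContinuousAt Φ z := by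
    intro z hz hz0
    have hgz' : g z ≠ 0 := hgz z hz
    have hfz : f z ≠ 0 := hnz z hz hz0
    have h1 : ContinuousAt (fun w => (Real.log (‖g w‖) : ℂ)) z :=
      Complex.continuous_ofReal.continuousAt.comp
        ((Real.continuousAt_log (by simpa using hgz')).comp
          (continuous_norm.continuousAt.comp (hgc z hz)))
    have h2 : ContinuousAt (fun w => (Real.log (‖f w‖) : ℂ)) z :=
      Complex.continuous_ofReal.continuousAt.comp
        ((Real.continuousAt_log (by simpa using hfz)).comp
          (continuous_norm.continuousAt.comp (hfc z hz)))
    exact ((continuousAt_const.mul h1).add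
      ((((continuousAt_const.mul h2).mul continuousAt_id).mul
        ((hdgc z hz).div (hgc z hz) hgz'))))
  -- the limit of Φ at the puncture
  have hxlog : Tendsto (fun x : ℝ => Real.log x * x) (𝓝[>] (0:ℝ)) (𝓝 0) := by
    simpa using tendsto_log_mul_rpow_nhdsGT_zero zero_lt_one
  have habs : Tendsto (fun z : ℂ => ‖z‖) (𝓝[≠] (0:ℂ)) (𝓝[>] (0:ℝ)) := by
    apply tendsto_nhdsWithin_of_tendsto_nhds_of_eventually_within
    · simpa using (continuous_norm.tendsto 0).mono_left
        (nhdsWithin_le_nhds (s := {(0:ℂ)}ᶜ))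
    · filter_upwards [self_mem_nhdsWithin] with z hz
      simpa using hz
  have hzlogz : Tendsto (fun z : ℂ => (Real.log (‖z‖) : ℂ) * z)
      (𝓝[≠] (0:ℂ)) (𝓝 0) := by
    rw [tendsto_zero_iff_norm_tendsto_zero]
    have h1 : Tendsto (fun x : ℝ => |Real.log x * x|) (𝓝[>] (0:ℝ)) (𝓝 0) := by
      simpa [Function.comp_def, abs_mul] using (continuous_abs.tendsto 0).comp hxlog
    have h2 := h1.comp habs
    refine h2.congr fun z => ?_
    simp only [Function.comp]
    rw [norm_mul, Complex.norm_real, Real.norm_eq_abs, abs_mul,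
      abs_of_nonneg (norm_nonneg z)]
  have hgc0 : ContinuousAt g 0 := hgc 0 h0mem
  have hdg0 : ContinuousAt (deriv g) 0 := hdgc 0 h0mem
  have hglogc : ContinuousAt (fun w => (Real.log (‖g w‖) : ℂ)) 0 :=
    Complex.continuous_ofReal.continuousAt.comp
      ((Real.continuousAt_log (by simp [hg0, hlam0])).comp
        (continuous_norm.continuousAt.comp hgc0))
  have hΦlim : Tendsto Φ (𝓝[≠] (0:ℂ)) (𝓝 (2 * (Real.log (‖lam‖) : ℂ))) := by
    have hA : Tendsto (fun z => 2 * (Real.log (‖g z‖) : ℂ)) (𝓝[≠] (0:ℂ))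
        (𝓝 (2 * (Real.log (‖lam‖) : ℂ))) := by
      have := (hglogc.tendsto.mono_left (nhdsWithin_le_nhds (s := {(0:ℂ)}ᶜ)))
      rw [hg0] at this
      exact tendsto_const_nhds.mul this
    have hflogz : Tendsto (fun z : ℂ => (Real.log (‖f z‖) : ℂ) * z)
        (𝓝[≠] (0:ℂ)) (𝓝 0) := by
      have hglogz : Tendsto (fun z : ℂ => (Real.log (‖g z‖) : ℂ) * z)
          (𝓝[≠] (0:ℂ)) (𝓝 0) := by
        have := (hglogc.tendsto.mono_left (nhdsWithin_le_nhds (s := {(0:ℂ)}ᶜ))).mul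
          ((tendsto_id (x := 𝓝 (0:ℂ))).mono_left (nhdsWithin_le_nhds (s := {(0:ℂ)}ᶜ)))
        simpa using this
      have hsum := hzlogz.add hglogz
      rw [add_zero] at hsum
      refine hsum.congr' ?_
      have hgev : ∀ᶠ z in 𝓝[≠] (0:ℂ), g z ≠ 0 := by
        have := hgc0.eventually_ne (by rw [hg0]; exact hlam0)
        exact this.filter_mono (nhdsWithin_le_nhds (s := {(0:ℂ)}ᶜ))
      filter_upwards [self_mem_nhdsWithin, hgev] with z hz0 hgz'
      have hz0' : z ≠ 0 := hz0
      rw [hfg z, norm_mul, Real.log_mul (by simpa using hz0') (by simpa using hgz')]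
      push_cast
      ring
    have hB : Tendsto
        (fun z => 2 * (Real.log (‖f z‖) : ℂ) * z * (deriv g z / g z))
        (𝓝[≠] (0:ℂ)) (𝓝 0) := by
      have hquot : Tendsto (fun z => deriv g z / g z) (𝓝[≠] (0:ℂ))
          (𝓝 (deriv g 0 / lam)) := by
        have h1 := hdg0.tendsto.mono_left (nhdsWithin_le_nhds (s := {(0:ℂ)}ᶜ))
        have h2 := hgc0.tendsto.mono_left (nhdsWithin_le_nhds (s := {(0:ℂ)}ᶜ))
        rw [hg0] at h2
        exact h1.div h2 hlam0
      have := ((tendsto_const_nhds (x := (2:ℂ))).mul hflogz).mul hquot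
      rw [mul_zero, zero_mul] at this
      refine this.congr fun z => ?_
      ring
    have := hA.add hB
    rw [add_zero] at this
    exact this
  -- integrability on circles
  have hint : ∀ ε : ℝ, 0 < ε → ε < R →
      IntervalIntegrable (fun θ => Φ (circleMap 0 ε θ)) MeasureTheory.volume 0 (2 * Real.pi) := by
    intro ε hε0 hεR
    apply ContinuousOn.intervalIntegrable
    intro θ _
    have hz0 : circleMap 0 ε θ ≠ 0 := circleMap_ne_center hε0.ne'
    have hzball : circleMap 0 ε θ ∈ Metric.ball (0:ℂ) R := by
      rw [Metric.mem_ball, Complex.dist_eq, sub_zero, norm_circleMap_zero, abs_of_pos hε0]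
      exact hεR
    exact ((hΦat _ hzball hz0).comp
      (continuous_circleMap 0 ε).continuousAt).continuousWithinAt
  have hmain := circle_avg_tendsto Φ R hR (2 * (Real.log (‖lam‖) : ℂ))
    hint hΦlim
  have hfinal := hmain.const_mul Complex.I
  -- identify the constant
  have hconst : Complex.I * ((2 * Real.pi : ℂ) * (2 * (Real.log (‖lam‖) : ℂ)))
      = (2 * Real.pi : ℝ) * Complex.I * (Real.log (‖lam‖ ^ 2) : ℂ) := by
    rw [Real.log_pow]
    push_cast
    ring
  rw [hconst] at hfinal
  refine hfinal.congr' ?_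
  have hIoo : Set.Ioo (0:ℝ) R ∈ 𝓝[>] (0:ℝ) := Ioo_mem_nhdsGT_of_mem ⟨le_refl 0, hR⟩
  filter_upwards [hIoo] with ε hε
  obtain ⟨hε0, hεR⟩ := hε
  rw [circleIntegral, ← intervalIntegral.integral_const_mul]
  refine (intervalIntegral.integral_congr fun θ _ => ?_).symm
  set z := circleMap 0 ε θ with hzdef
  have hz0 : z ≠ 0 := circleMap_ne_center hε0.ne'
  have hzball : z ∈ Metric.ball (0:ℂ) R := by
    rw [Metric.mem_ball, Complex.dist_eq, sub_zero, norm_circleMap_zero, abs_of_pos hε0]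
    exact hεR
  have hgz' : g z ≠ 0 := hgz z hzball
  have hfz : f z ≠ 0 := hnz z hzball hz0
  have hlog : (Real.log (‖f z‖) : ℂ)
      = (Real.log (‖z‖) : ℂ) + (Real.log (‖g z‖) : ℂ) := by
    rw [hfg z, norm_mul, Real.log_mul (by simpa using hz0) (by simpa using hgz')]
    push_cast
    ring
  rw [deriv_circleMap, smul_eq_mul, hΦdef]
  simp only [← hzdef]
  rw [hderiv z hzball, hlog, hfg z]
  field_simp
  ring
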